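/- Let (A, m, Δ) be an infinitesimal bialgebra of weight λ, and define a ⊳ b := Σ_{(b)} b_(1) a b_(2) (the image of Δ(b) under the linear map sending x ⊗ y to x a y). Then (A, ⊳) is a left pre-Lie algebra: ⊳ is k-bilinear and (a ⊳ b) ⊳ c − a ⊳ (b ⊳ c) = (b ⊳ a) ⊳ c − b ⊳ (a ⊳ c) for all a, b, c ∈ A. -/

import Mathlib

open TensorProduct

/-- The linear map `A ⊗ A → A` sending `x ⊗ y` to `x * a * y`. -/
noncomputable def sandwich (k : Type*) {A : Type*} [CommRing k] [NonUnitalRing A]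
    [Module k A] [SMulCommClass k A A] [IsScalarTower k A A] (a : A) :
    A ⊗[k] A →ₗ[k] A :=
  (LinearMap.mul' k A).comp (LinearMap.rTensor A (LinearMap.mulRight k a))

section Aux

variable {k A : Type*} [CommRing k] [NonUnitalRing A] [Module k A]
    [SMulCommClass k A A] [IsScalarTower k A A]

lemma sandwich_tmul (a x y : A) : sandwich k a (x ⊗ₜ[k] y) = x * a * y := by
  simp [sandwich]

lemma sandwich_rTensor_mulLeft (a u : A) (s : A ⊗[k] A) :
    sandwich k a (LinearMap.rTensor A (LinearMap.mulLeft k u) s) = u * sandwich k a s := by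
  induction s using TensorProduct.induction_on with
  | zero => simp
  | tmul x y => simp [sandwich_tmul, mul_assoc]
  | add s t hs ht => simp only [map_add, hs, ht, mul_add]

lemma sandwich_lTensor_mulRight (a v : A) (s : A ⊗[k] A) :
    sandwich k a (LinearMap.lTensor A (LinearMap.mulRight k v) s) = sandwich k a s * v := by
  induction s using TensorProduct.induction_on with
  | zero => simp
  | tmul x y => simp [sandwich_tmul, mul_assoc]
  | add s t hs ht => simp only [map_add, hs, ht, add_mul]

/-- The linear map `(A ⊗ A) ⊗ A → A` sending `s ⊗ z` to `(sandwich b s) * a * z`. -/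
noncomputable def Nmap (k : Type*) {A : Type*} [CommRing k] [NonUnitalRing A]
    [Module k A] [SMulCommClass k A A] [IsScalarTower k A A] (b a : A) :
    (A ⊗[k] A) ⊗[k] A →ₗ[k] A :=
  TensorProduct.lift (LinearMap.mk₂ k (fun s z => sandwich k b s * a * z)
    (fun s t z => by rw [map_add, add_mul, add_mul])
    (fun r s z => by rw [map_smul, smul_mul_assoc, smul_mul_assoc])
    (fun s z w => by rw [mul_add])
    (fun r s z => by rw [mul_smul_comm]))

lemma Nmap_tmul (b a : A) (s : A ⊗[k] A) (z : A) :
    Nmap k b a (s ⊗ₜ[k] z) = sandwich k b s * a * z := rfl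

lemma Nmap_assoc_symm (b a x : A) (s : A ⊗[k] A) :
    Nmap k b a ((TensorProduct.assoc k A A A).symm (x ⊗ₜ[k] s)) =
      (x * b) * sandwich k a s := by
  induction s using TensorProduct.induction_on with
  | zero => simp
  | tmul p q =>
    simp only [TensorProduct.assoc_symm_tmul, Nmap_tmul, sandwich_tmul, mul_assoc]
  | add s t hs ht =>
    rw [TensorProduct.tmul_add, map_add, map_add, hs, ht, map_add, mul_add]

end Aux

/-- In an infinitesimal bialgebra of weight `λ`, the operation
`a ⊳ b := Σ b₁ a b₂` is `k`-bilinear and makes `A` a left pre-Lie algebra. -/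
theorem infinitesimal_bialgebra_gives_pre_lie
    {k A : Type*} [CommRing k] [NonUnitalRing A] [Module k A]
    [SMulCommClass k A A] [IsScalarTower k A A] (lam : k)
    (Δ : A →ₗ[k] A ⊗[k] A)
    (hcoassoc : ∀ a : A,
      (TensorProduct.assoc k A A A) (LinearMap.rTensor A Δ (Δ a)) =
        LinearMap.lTensor A Δ (Δ a))
    (hcompat : ∀ a b : A,
      Δ (a * b) =
        LinearMap.rTensor A (LinearMap.mulLeft k a) (Δ b) +
        LinearMap.lTensor A (LinearMap.mulRight k b) (Δ a) +
        lam • (a ⊗ₜ[k] b)) :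
    (∀ a a' b : A,
      sandwich k (a + a') (Δ b) = sandwich k a (Δ b) + sandwich k a' (Δ b)) ∧
    (∀ (r : k) (a b : A),
      sandwich k (r • a) (Δ b) = r • sandwich k a (Δ b)) ∧
    (∀ a b b' : A,
      sandwich k a (Δ (b + b')) = sandwich k a (Δ b) + sandwich k a (Δ b')) ∧
    (∀ (r : k) (a b : A),
      sandwich k a (Δ (r • b)) = r • sandwich k a (Δ b)) ∧
    (∀ a b c : A,
      sandwich k (sandwich k a (Δ b)) (Δ c) - sandwich k a (Δ (sandwich k b (Δ c))) =
        sandwich k (sandwich k b (Δ a)) (Δ c) - sandwich k b (Δ (sandwich k a (Δ c)))) := by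
  -- additivity of `sandwich` in the first argument, on any tensor
  have hadd : ∀ (a a' : A) (t : A ⊗[k] A),
      sandwich k (a + a') t = sandwich k a t + sandwich k a' t := by
    intro a a' t
    induction t using TensorProduct.induction_on with
    | zero => simp
    | tmul x y => simp [sandwich_tmul, mul_add, add_mul]
    | add s t hs ht => rw [map_add, map_add, map_add, hs, ht]; abel
  have hsmul : ∀ (r : k) (a : A) (t : A ⊗[k] A),
      sandwich k (r • a) t = r • sandwich k a t := by
    intro r a t
    induction t using TensorProduct.induction_on with
    | zero => simp
    | tmul x y => rw [sandwich_tmul, sandwich_tmul, mul_smul_comm, smul_mul_assoc]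
    | add s t hs ht => rw [map_add, map_add, hs, ht, smul_add]
  -- the key expansion of `a ⊳ (b ⊳ t)` for any tensor `t`
  have key : ∀ (a b : A) (t : A ⊗[k] A),
      sandwich k a (Δ (sandwich k b t)) =
        Nmap k b a ((TensorProduct.assoc k A A A).symm
            (LinearMap.lTensor A Δ t)) +
        sandwich k (sandwich k a (Δ b)) t +
        Nmap k a b (LinearMap.rTensor A Δ t) +
        lam • sandwich k (a * b) t + lam • sandwich k (b * a) t := by
    intro a b t
    induction t using TensorProduct.induction_on with
    | zero => simp
    | tmul x y =>
      rw [LinearMap.lTensor_tmul, LinearMap.rTensor_tmul, Nmap_assoc_symm, Nmap_tmul,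
        sandwich_tmul, sandwich_tmul, sandwich_tmul, sandwich_tmul]
      have h1 : x * b * y = (x * b) * y := rfl
      rw [h1, hcompat (x * b) y, map_add, map_add, sandwich_rTensor_mulLeft,
        sandwich_lTensor_mulRight, map_smul, sandwich_tmul,
        hcompat x b, map_add, map_add, sandwich_rTensor_mulLeft,
        sandwich_lTensor_mulRight, map_smul, sandwich_tmul]
      simp only [mul_assoc, add_mul, smul_mul_assoc]
      abel
    | add s t hs ht =>
      simp only [map_add, hs, ht, smul_add]
      abel
  -- coassociativity: the two `Nmap` expressions agree on `Δ c`
  have hco : ∀ (a b c : A),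
      Nmap k b a ((TensorProduct.assoc k A A A).symm
          (LinearMap.lTensor A Δ (Δ c))) =
        Nmap k b a (LinearMap.rTensor A Δ (Δ c)) := by
    intro a b c
    rw [← hcoassoc c, LinearEquiv.symm_apply_apply]
  refine ⟨fun a a' b => hadd a a' (Δ b), fun r a b => hsmul r a (Δ b),
    fun a b b' => by rw [map_add, map_add], fun r a b => by rw [map_smul, map_smul], ?_⟩
  intro a b c
  rw [key a b (Δ c), key b a (Δ c), hco a b c, hco b a c]
  abel
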